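/- The coefficient of x^{n+2} in x³(36x⁸+129x⁶-207x⁵+234x⁴-126x³+49x²-10x+1)/((1-3x)(1-2x)²(1-x)⁶), call it diag(n), satisfies diag(n-2) = (121/48)·3^n - 2^n(45n - 411) - (53n⁵/120 - 15n⁴/8 + 823n³/24 - 6n² + 22711n/60 + 4995/16) for n sufficiently large. -/

import Mathlib

open PowerSeries

/-- The closed form. -/
noncomputable def fdiag (n : ℕ) : ℚ :=
  (121 / 48 : ℚ) * 3 ^ n - 2 ^ n * (45 * (n : ℚ) - 411) -
    (53 * (n : ℚ) ^ 5 / 120 - 15 * (n : ℚ) ^ 4 / 8 + 823 * (n : ℚ) ^ 3 / 24 -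
      6 * (n : ℚ) ^ 2 + 22711 * (n : ℚ) / 60 + 4995 / 16)

/-- The coefficient sequence of the generating function. -/
noncomputable def gdiag (n : ℕ) : ℚ := if n < 3 then 0 else fdiag n

/-- Coefficients of the denominator. -/
def ddiag (i : ℕ) : ℚ := [1, -13, 73, -233, 467, -611, 523, -283, 88, -12].getD i 0

/-- Coefficients of the numerator. -/
def pdiag (j : ℕ) : ℚ := [0, 0, 0, 1, -10, 49, -126, 234, -207, 129, 0, 36].getD j 0

lemma ddiag_expand :
    ((1 - 3 * X) * (1 - 2 * X) ^ 2 * (1 - X) ^ 6 : PowerSeries ℚ) =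
      ∑ i ∈ Finset.range 10, C (ddiag i) * X ^ i := by
  simp only [Finset.sum_range_succ, Finset.sum_range_zero, ddiag, List.getD_cons_zero,
    List.getD_cons_succ, map_ofNat, map_neg, map_one]
  ring

lemma pdiag_expand :
    (X ^ 3 * (36 * X ^ 8 + 129 * X ^ 6 - 207 * X ^ 5 + 234 * X ^ 4 -
        126 * X ^ 3 + 49 * X ^ 2 - 10 * X + 1) : PowerSeries ℚ) =
      ∑ j ∈ Finset.range 12, C (pdiag j) * X ^ j := by
  simp only [Finset.sum_range_succ, Finset.sum_range_zero, pdiag, List.getD_cons_zero,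
    List.getD_cons_succ, map_ofNat, map_neg, map_one, map_zero]
  ring

set_option maxHeartbeats 2000000 in
lemma key : (PowerSeries.mk gdiag) * ((1 - 3 * X) * (1 - 2 * X) ^ 2 * (1 - X) ^ 6 : PowerSeries ℚ)
    = X ^ 3 * (36 * X ^ 8 + 129 * X ^ 6 - 207 * X ^ 5 + 234 * X ^ 4 -
        126 * X ^ 3 + 49 * X ^ 2 - 10 * X + 1) := by
  rw [ddiag_expand, pdiag_expand]
  ext n
  rw [Finset.mul_sum, map_sum, map_sum]
  have hL : ∀ i ∈ Finset.range 10,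
      coeff n (PowerSeries.mk gdiag * (C (ddiag i) * X ^ i)) =
        ddiag i * (if i ≤ n then gdiag (n - i) else 0) := by
    intro i _
    rw [mul_left_comm, coeff_C_mul, coeff_mul_X_pow']
    simp [coeff_mk]
  have hR : ∀ j ∈ Finset.range 12,
      coeff n (C (pdiag j) * X ^ j) = if n = j then pdiag j else 0 := by
    intro j _
    rw [coeff_C_mul, coeff_X_pow]
    split <;> simp
  rw [Finset.sum_congr rfl hL, Finset.sum_congr rfl hR, Finset.sum_ite_eq]
  by_cases h : n < 12
  · interval_cases n <;>
      norm_num [Finset.sum_range_succ, ddiag, pdiag, gdiag, fdiag]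
  · obtain ⟨m, rfl⟩ : ∃ m, n = m + 12 := ⟨n - 12, by omega⟩
    have hmem : ¬ (m + 12 ∈ Finset.range 12) := by simp
    rw [if_neg hmem]
    have e1 : m + 12 - 1 = m + 11 := by omega
    have e2 : m + 12 - 2 = m + 10 := by omega
    have e3 : m + 12 - 3 = m + 9 := by omega
    have e4 : m + 12 - 4 = m + 8 := by omega
    have e5 : m + 12 - 5 = m + 7 := by omega
    have e6 : m + 12 - 6 = m + 6 := by omega
    have e7 : m + 12 - 7 = m + 5 := by omega
    have e8 : m + 12 - 8 = m + 4 := by omega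
    have e9 : m + 12 - 9 = m + 3 := by omega
    simp only [Finset.sum_range_succ, Finset.sum_range_zero, e1, e2, e3, e4, e5, e6, e7, e8, e9,
      Nat.sub_zero]
    have hg : ∀ k, 3 ≤ k → gdiag k = fdiag k := fun k hk => by
      simp [gdiag, Nat.not_lt.mpr hk]
    rw [if_pos (by omega), if_pos (by omega), if_pos (by omega), if_pos (by omega),
      if_pos (by omega), if_pos (by omega), if_pos (by omega), if_pos (by omega),
      if_pos (by omega), if_pos (by omega)]
    rw [hg _ (by omega), hg _ (by omega), hg _ (by omega), hg _ (by omega), hg _ (by omega),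
      hg _ (by omega), hg _ (by omega), hg _ (by omega), hg _ (by omega), hg _ (by omega)]
    simp only [fdiag, ddiag, List.getD_cons_zero, List.getD_cons_succ, pow_add]
    push_cast
    ring

/-- Closed form for the number of 3D diagonal minimal inscribed polyominoes:
writing `Diag(x) = x³(36x⁸+129x⁶-207x⁵+234x⁴-126x³+49x²-10x+1)/((1-3x)(1-2x)²(1-x)⁶)
 = Σ diag(m) x^{m+2}`, we have
`diag(n-2) = (121/48)·3ⁿ - 2ⁿ(45n-411) - (53n⁵/120 - 15n⁴/8 + 823n³/24 - 6n² + 22711n/60 + 4995/16)`,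
i.e. the coefficient of `x^n` is the stated function of `n`, for `n` sufficiently
large (`n ≥ 3`). -/
theorem diag_count (n : ℕ) (hn : 3 ≤ n) :
    PowerSeries.coeff (R := ℚ) n
        (X ^ 3 * (36 * X ^ 8 + 129 * X ^ 6 - 207 * X ^ 5 + 234 * X ^ 4 -
            126 * X ^ 3 + 49 * X ^ 2 - 10 * X + 1) *
          ((1 - 3 * X) * (1 - 2 * X) ^ 2 * (1 - X) ^ 6)⁻¹ : PowerSeries ℚ) =
      (121 / 48 : ℚ) * 3 ^ n - 2 ^ n * (45 * (n : ℚ) - 411) -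
        (53 * (n : ℚ) ^ 5 / 120 - 15 * (n : ℚ) ^ 4 / 8 + 823 * (n : ℚ) ^ 3 / 24 -
          6 * (n : ℚ) ^ 2 + 22711 * (n : ℚ) / 60 + 4995 / 16) := by
  have hD : constantCoeff ((1 - 3 * X) * (1 - 2 * X) ^ 2 * (1 - X) ^ 6 : PowerSeries ℚ) ≠ 0 := by
    simp
  have hinv : ((1 - 3 * X) * (1 - 2 * X) ^ 2 * (1 - X) ^ 6 : PowerSeries ℚ) *
      ((1 - 3 * X) * (1 - 2 * X) ^ 2 * (1 - X) ^ 6 : PowerSeries ℚ)⁻¹ = 1 :=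
    PowerSeries.mul_inv_cancel _ hD
  have hser : (X ^ 3 * (36 * X ^ 8 + 129 * X ^ 6 - 207 * X ^ 5 + 234 * X ^ 4 -
      126 * X ^ 3 + 49 * X ^ 2 - 10 * X + 1) *
        ((1 - 3 * X) * (1 - 2 * X) ^ 2 * (1 - X) ^ 6)⁻¹ : PowerSeries ℚ) =
      PowerSeries.mk gdiag := by
    rw [← key, mul_assoc, hinv, mul_one]
  rw [hser, coeff_mk, gdiag, if_neg (Nat.not_lt.mpr hn), fdiag]
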